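/- For k ∈ ℕ (k ≥ 1) and λ ∈ (0, 1/k), the degenerate gamma function at the positive integer k satisfies Γ_λ(k) = (k−1)! / [(1−λ)(1−2λ)⋯(1−kλ)]. -/

import Mathlib

open MeasureTheory Set Finset Filter

lemma aux_integrable (l : ℝ) (hl : 0 < l) (m : ℕ) (a : ℝ) (ha : (m : ℝ) + 1 < a) :
    IntegrableOn (fun t : ℝ => t ^ m * (1 + l * t) ^ (-a)) (Ioi (0 : ℝ)) := by
  have hpos : ∀ t : ℝ, 0 ≤ t → 0 < 1 + l * t := fun t ht => by nlinarith
  have hcont : ContinuousOn (fun t : ℝ => t ^ m * (1 + l * t) ^ (-a)) (Ici 0) := by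
    refine (continuousOn_id.pow m).mul (ContinuousOn.rpow_const ?_ ?_)
    · exact (continuousOn_const.add (continuousOn_const.mul continuousOn_id))
    · exact fun x hx => Or.inl (ne_of_gt (hpos x hx))
  rw [← Ioc_union_Ioi_eq_Ioi (zero_le_one : (0:ℝ) ≤ 1)]
  refine IntegrableOn.union ?_ ?_
  · exact ((hcont.mono (Icc_subset_Ici_self)).integrableOn_compact isCompact_Icc).mono_set
      Ioc_subset_Icc_self
  · have hint : IntegrableOn (fun t : ℝ => l ^ (-a) * t ^ ((m : ℝ) - a)) (Ioi 1) :=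
      (integrableOn_Ioi_rpow_of_lt (by linarith) zero_lt_one).const_mul _
    have hmeas : AEStronglyMeasurable (fun t : ℝ => t ^ m * (1 + l * t) ^ (-a)) (volume.restrict (Ioi 1)) :=
      (hcont.mono (fun x (hx : x ∈ Ioi (1:ℝ)) => Set.mem_Ici.mpr (le_of_lt (lt_trans zero_lt_one (Set.mem_Ioi.mp hx))))).aestronglyMeasurable measurableSet_Ioi
    refine hint.mono' hmeas ?_
    rw [ae_restrict_iff' measurableSet_Ioi]
    filter_upwards with t ht
    have h1 : (1:ℝ) < t := ht
    have h0 : (0:ℝ) < t := lt_trans zero_lt_one h1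
    have hlt : 0 < l * t := mul_pos hl h0
    rw [Real.norm_eq_abs, abs_of_nonneg (by positivity)]
    have hb : (1 + l * t) ^ (-a) ≤ (l * t) ^ (-a) :=
      Real.rpow_le_rpow_of_nonpos hlt (by linarith) (by linarith)
    calc t ^ m * (1 + l * t) ^ (-a) ≤ t ^ m * (l * t) ^ (-a) := by
          exact mul_le_mul_of_nonneg_left hb (by positivity)
      _ = l ^ (-a) * t ^ ((m : ℝ) - a) := by
          rw [Real.mul_rpow hl.le h0.le, ← Real.rpow_natCast t m,
            show (m:ℝ) - a = (m:ℝ) + (-a) by ring, Real.rpow_add h0]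
          ring

lemma aux_deriv (l : ℝ) (hl : 0 < l) (b : ℝ) (t : ℝ) (ht : 0 ≤ t) :
    HasDerivAt (fun t : ℝ => (1 + l * t) ^ (-b)) (-b * (1 + l * t) ^ (-b - 1) * l) t := by
  have hg : HasDerivAt (fun t : ℝ => 1 + l * t) l t := by
    simpa using (hasDerivAt_id t).const_mul l |>.const_add 1
  have h0 : (0:ℝ) < 1 + l * t := by nlinarith
  exact (Real.hasDerivAt_rpow_const (Or.inl h0.ne')).comp t hg

lemma aux_tendsto (l : ℝ) (hl : 0 < l) (b : ℝ) (hb : 0 < b) :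
    Filter.Tendsto (fun t : ℝ => (1 + l * t) ^ (-b)) Filter.atTop (nhds 0) := by
  have h1 : Filter.Tendsto (fun t : ℝ => 1 + l * t) Filter.atTop Filter.atTop := by
    apply Filter.tendsto_atTop_add_const_left
    exact Filter.Tendsto.const_mul_atTop hl Filter.tendsto_id
  exact (tendsto_rpow_neg_atTop hb).comp h1

lemma aux_base (l : ℝ) (hl : 0 < l) (a : ℝ) (ha : (1:ℝ) < a) :
    ∫ t in Ioi (0:ℝ), (1 + l * t) ^ (-a) = 1 / (l * (a - 1)) := by
  have hla : l * (a - 1) ≠ 0 := (mul_pos hl (by linarith)).ne'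
  have hderiv : ∀ t ∈ Ici (0:ℝ), HasDerivAt (fun t : ℝ => -(1 + l * t) ^ (-(a-1)) / (l * (a-1)))
      ((1 + l * t) ^ (-a)) t := by
    intro t ht
    have := ((aux_deriv l hl (a-1) t ht).neg).div_const (l * (a-1))
    refine this.congr_deriv (Eq.symm ?_)
    have h0 : (0:ℝ) < 1 + l * t := by nlinarith [ht.out]
    rw [show -(a-1) - 1 = -a by ring]
    have ha1 : a - 1 ≠ 0 := by linarith
    field_simp
  have hint : IntegrableOn (fun t : ℝ => (1 + l * t) ^ (-a)) (Ioi (0:ℝ)) := by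
    have := aux_integrable l hl 0 a (by push_cast; linarith)
    simpa using this
  have htend : Filter.Tendsto (fun t : ℝ => -(1 + l * t) ^ (-(a-1)) / (l * (a-1)))
      Filter.atTop (nhds 0) := by
    have := ((aux_tendsto l hl (a-1) (by linarith)).neg).div_const (l * (a-1))
    simpa using this
  rw [MeasureTheory.integral_Ioi_of_hasDerivAt_of_tendsto' hderiv hint htend]
  rw [show (1:ℝ) + l * 0 = 1 by ring, Real.one_rpow]
  ring

lemma aux_main (l : ℝ) (hl : 0 < l) : ∀ (m : ℕ) (a : ℝ), (m : ℝ) + 1 < a →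
    ∫ t in Ioi (0:ℝ), t ^ m * (1 + l * t) ^ (-a)
      = (m.factorial : ℝ) / (l ^ (m + 1) * ∏ j ∈ range (m + 1), (a - (j + 1))) := by
  intro m
  induction m with
  | zero =>
    intro a ha
    push_cast at ha
    simp only [pow_zero, one_mul, Nat.factorial_zero, Nat.cast_one, pow_one, range_one,
      prod_singleton, Nat.cast_zero, zero_add]
    rw [aux_base l hl a (by linarith)]
    norm_num
  | succ m ih =>
    intro a ha
    push_cast at ha
    have ha1 : (m : ℝ) + 1 < a - 1 := by linarith
    have h1a : (1:ℝ) - a ≠ 0 := by linarith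
    have hc : l * (1 - a) ≠ 0 := mul_ne_zero hl.ne' h1a
    set c : ℝ := ((m:ℝ) + 1) / (l * (1 - a)) with hc_def
    -- the function and its derivative
    have hderiv : ∀ t ∈ Ici (0:ℝ),
        HasDerivAt (fun t : ℝ => t ^ (m+1) * (1 + l * t) ^ (-(a-1)) / (l * (1 - a)))
          (c * (t ^ m * (1 + l * t) ^ (-(a-1))) + t ^ (m+1) * (1 + l * t) ^ (-a)) t := by
      intro t ht
      have h0 : (0:ℝ) < 1 + l * t := by nlinarith [ht.out]
      have hp : HasDerivAt (fun t : ℝ => t ^ (m+1)) (((m:ℝ)+1) * t ^ m) t := by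
        simpa using hasDerivAt_pow (m+1) t
      have hr := aux_deriv l hl (a-1) t ht
      have := (hp.mul hr).div_const (l * (1 - a))
      refine this.congr_deriv (Eq.symm ?_)
      rw [show -(a-1) - 1 = -a by ring]
      have e1 : (1 + l * t) ^ (-(a-1)) = (1 + l * t) ^ (-a) * (1 + l * t) := by
        rw [← Real.rpow_add_one h0.ne' (-a)]; ring_nf
      rw [e1, hc_def, eq_div_iff hc]
      field_simp
      ring
    have hint1 : IntegrableOn (fun t : ℝ => c * (t ^ m * (1 + l * t) ^ (-(a-1)))) (Ioi (0:ℝ)) :=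
      (aux_integrable l hl m (a-1) ha1).const_mul c
    have hint2 : IntegrableOn (fun t : ℝ => t ^ (m+1) * (1 + l * t) ^ (-a)) (Ioi (0:ℝ)) :=
      aux_integrable l hl (m+1) a (by push_cast; linarith)
    have htend : Filter.Tendsto (fun t : ℝ => t ^ (m+1) * (1 + l * t) ^ (-(a-1)) / (l * (1 - a)))
        Filter.atTop (nhds 0) := by
      have hG : Filter.Tendsto (fun t : ℝ => t ^ (m+1) * (1 + l * t) ^ (-(a-1)))
          Filter.atTop (nhds 0) := by
        apply squeeze_zero' (g := fun t : ℝ => l ^ (-(a-1)) * t ^ ((m:ℝ) + 2 - a))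
        · filter_upwards [Filter.eventually_ge_atTop (0:ℝ)] with t ht
          have h0 : (0:ℝ) < 1 + l * t := by nlinarith
          positivity
        · filter_upwards [Filter.eventually_gt_atTop (0:ℝ)] with t ht
          have hlt : 0 < l * t := mul_pos hl ht
          have hb : (1 + l * t) ^ (-(a-1)) ≤ (l * t) ^ (-(a-1)) :=
            Real.rpow_le_rpow_of_nonpos hlt (by linarith) (by linarith)
          calc t ^ (m+1) * (1 + l * t) ^ (-(a-1)) ≤ t ^ (m+1) * (l * t) ^ (-(a-1)) :=
                mul_le_mul_of_nonneg_left hb (by positivity)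
            _ = l ^ (-(a-1)) * t ^ ((m:ℝ) + 2 - a) := by
                rw [Real.mul_rpow hl.le ht.le, ← Real.rpow_natCast t (m+1),
                  show (m:ℝ) + 2 - a = ((m+1:ℕ):ℝ) + (-(a-1)) by push_cast; ring,
                  Real.rpow_add ht]
                ring
        · have := (tendsto_rpow_neg_atTop (show (0:ℝ) < a - ((m:ℝ)+2) by linarith)).const_mul
            (l ^ (-(a-1)))
          simpa [show -(a - ((m:ℝ)+2)) = (m:ℝ) + 2 - a by ring] using this
      have := hG.div_const (l * (1 - a))
      simpa using this
    have key := MeasureTheory.integral_Ioi_of_hasDerivAt_of_tendsto' hderiv (hint1.add hint2) htend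
    rw [MeasureTheory.integral_add hint1 hint2, MeasureTheory.integral_const_mul,
      ih (a-1) ha1] at key
    have hF0 : (0:ℝ) ^ (m+1) * (1 + l * 0) ^ (-(a-1)) / (l * (1 - a)) = 0 := by
      simp
    rw [hF0] at key
    -- now solve for the target integral
    have hprod : ∏ j ∈ range (m + 1 + 1), (a - ((j:ℝ) + 1))
        = (∏ j ∈ range (m + 1), ((a - 1) - ((j:ℝ) + 1))) * (a - 1) := by
      rw [prod_range_succ']
      congr 1
      · exact prod_congr rfl fun j _ => by push_cast; ring
      · push_cast; ring
    have hprodne : (∏ j ∈ range (m + 1), ((a - 1) - ((j:ℝ) + 1))) ≠ 0 := by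
      apply prod_ne_zero_iff.mpr
      intro j hj
      have : (j:ℝ) ≤ m := by exact_mod_cast Nat.lt_succ_iff.mp (mem_range.mp hj)
      nlinarith
    rw [hprod]
    have key' : ∫ t in Ioi (0:ℝ), t ^ (m+1) * (1 + l * t) ^ (-a)
        = -(c * ((m.factorial : ℝ) / (l ^ (m + 1) * ∏ j ∈ range (m + 1), ((a-1) - ((j:ℝ) + 1))))) := by
      linarith [key]
    rw [key', hc_def, Nat.factorial_succ]
    push_cast
    set P := ∏ j ∈ range (m + 1), (a - 1 - ((j:ℝ) + 1)) with hP
    have hane : a - 1 ≠ 0 := by linarith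
    field_simp
    ring

/-- The degenerate gamma function `Γ_λ(s) = ∫₀^∞ (1+λt)^(−1/λ) t^(s−1) dt`. -/
noncomputable def degGamma (l : ℝ) (s : ℂ) : ℂ :=
  ∫ t in Ioi (0 : ℝ), (((1 + l * t) ^ (-(1 / l)) : ℝ) : ℂ) * (t : ℂ) ^ (s - 1)

theorem degGamma_nat (k : ℕ) (hk : 1 ≤ k) (l : ℝ) (hl : l ∈ Ioo (0 : ℝ) (1 / k)) :
    degGamma l (k : ℂ) =
      ((k - 1).factorial : ℂ) / ∏ j ∈ range k, ((1 : ℂ) - (j + 1) * l) := by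
  obtain ⟨hl0, hlk⟩ := hl
  have hk0 : (0:ℝ) < k := by exact_mod_cast hk
  have hka : ((k:ℝ) - 1) + 1 < 1 / l := by
    have h1 : (k:ℝ) * l < 1 := by
      have := (mul_lt_mul_of_pos_left hlk hk0)
      calc (k:ℝ) * l < (k:ℝ) * (1 / k) := this
        _ = 1 := by field_simp
    rw [lt_div_iff₀ hl0]
    linarith
  -- rewrite the complex integral as a real one
  have hre : degGamma l (k : ℂ)
      = ((∫ t in Ioi (0:ℝ), t ^ (k-1) * (1 + l * t) ^ (-(1/l))) : ℝ) := by
    have e : ∫ t in Ioi (0:ℝ), (((t ^ (k-1) * (1 + l * t) ^ (-(1/l))) : ℝ) : ℂ)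
        = ((∫ t in Ioi (0:ℝ), t ^ (k-1) * (1 + l * t) ^ (-(1/l)) : ℝ) : ℂ) := integral_ofReal
    rw [degGamma, ← e]
    refine setIntegral_congr_fun measurableSet_Ioi fun t ht => ?_
    have h0 : (0:ℝ) < 1 + l * t := by nlinarith [ht.out]
    have he : (k : ℂ) - 1 = ((k - 1 : ℕ) : ℂ) := by
      push_cast [Nat.cast_sub hk]; ring
    rw [he, Complex.cpow_natCast]
    push_cast
    ring
  rw [hre, aux_main l hl0 (k-1) (1/l) (by push_cast [Nat.cast_sub hk]; linarith)]
  rw [Nat.sub_add_cancel hk]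
  have hprod : l ^ k * ∏ j ∈ range k, (1/l - ((j:ℝ) + 1))
      = ∏ j ∈ range k, (1 - ((j:ℝ) + 1) * l) := by
    rw [show l ^ k = ∏ _j ∈ range k, l by rw [prod_const, card_range], ← prod_mul_distrib]
    refine prod_congr rfl fun j _ => ?_
    field_simp
  rw [hprod]
  push_cast
  rfl
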